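/- For the SINDy bio-model ẋ(t) = a − b y(t), ẏ(t) = [t ≥ τ](c + e x(t)²) with a, b, c, e > 0, x(0)=y(0)=0 and y ≡ 0 on [0,τ], the solution eventually satisfies x(t) < 0 for sufficiently large t. -/

import Mathlib

/-- In the SINDy bio-model `ẋ = a - b y`, `ẏ = c + e x²` for `t ≥ τ` (and `y ≡ 0`
on `[0, τ]`) with `a, b, c, e, τ > 0` and `x(0) = y(0) = 0`, the solution eventually
satisfies `x(t) < 0` for all sufficiently large `t`. -/
theorem bio_model_eventually_negative (a b c e τ : ℝ)
    (ha : 0 < a) (hb : 0 < b) (hc : 0 < c) (he : 0 < e) (hτ : 0 < τ)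
    (x y : ℝ → ℝ) (hx0 : x 0 = 0) (hy0 : y 0 = 0)
    (hyhist : ∀ t ∈ Set.Icc (0 : ℝ) τ, y t = 0)
    (hx : ∀ t ∈ Set.Ici (0 : ℝ), HasDerivWithinAt x (a - b * y t) (Set.Ici 0) t)
    (hy : ∀ t ∈ Set.Ici τ, HasDerivWithinAt y (c + e * (x t) ^ 2) (Set.Ici τ) t) :
    ∃ T : ℝ, ∀ t ≥ T, x t < 0 := by
  -- Step 1: y t ≥ c * (t - τ) for t ≥ τ.
  have hyτ : y τ = 0 := hyhist τ ⟨le_of_lt hτ, le_refl τ⟩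
  have hycont : ContinuousOn y (Set.Ici τ) := fun t ht =>
    (hy t ht).continuousWithinAt
  have hgmono : MonotoneOn (fun t => y t - c * t) (Set.Ici τ) := by
    apply monotoneOn_of_hasDerivWithinAt_nonneg (convex_Ici τ)
      (f' := fun t => e * (x t) ^ 2)
      (hycont.sub (continuous_const.mul continuous_id).continuousOn)
    · intro t ht
      rw [interior_Ici] at ht ⊢
      have h1 : HasDerivWithinAt y (c + e * (x t) ^ 2) (Set.Ioi τ) t :=
        (hy t (Set.mem_Ici.mpr (le_of_lt ht))).mono Set.Ioi_subset_Ici_self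
      have h2 : HasDerivWithinAt (fun t => c * t) c (Set.Ioi τ) t := by
        simpa using ((hasDerivAt_id t).const_mul c).hasDerivWithinAt
      have h3 := h1.sub h2
      simp only [add_sub_cancel_left] at h3
      exact h3
    · intro t _
      positivity
  have hylb : ∀ t ≥ τ, c * (t - τ) ≤ y t := by
    intro t ht
    have := hgmono (Set.self_mem_Ici) ht ht
    simp only [hyτ] at this
    linarith
  -- Step 2: choose T₁ past which ẋ ≤ -1.
  set T₁ : ℝ := τ + (a + 1) / (b * c) with hT₁def
  have hbc : 0 < b * c := mul_pos hb hc
  have hT₁τ : τ ≤ T₁ := by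
    have h0 : 0 ≤ (a + 1) / (b * c) := by positivity
    rw [hT₁def]; linarith
  have hT₁0 : (0 : ℝ) ≤ T₁ := le_trans (le_of_lt hτ) hT₁τ
  have hderiv_le : ∀ t ≥ T₁, a - b * y t ≤ -1 := by
    intro t ht
    have h1 : c * (t - τ) ≤ y t := hylb t (le_trans hT₁τ ht)
    have h2 : (a + 1) / (b * c) ≤ t - τ := by
      rw [hT₁def] at ht; linarith
    have h3 : a + 1 ≤ b * c * (t - τ) := by
      rw [div_le_iff₀ hbc] at h2; linarith
    nlinarith
  -- Step 3: h = x + id is antitone on Ici T₁.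
  have hxcont : ContinuousOn x (Set.Ici T₁) := by
    intro t ht
    exact ((hx t (le_trans hT₁0 ht)).continuousWithinAt).mono
      (Set.Ici_subset_Ici.mpr hT₁0)
  have hhanti : AntitoneOn (fun t => x t + t) (Set.Ici T₁) := by
    apply antitoneOn_of_hasDerivWithinAt_nonpos (convex_Ici T₁)
      (f' := fun t => (a - b * y t) + 1)
      (hxcont.add continuous_id.continuousOn)
    · intro t ht
      rw [interior_Ici] at ht ⊢
      have h1 : HasDerivWithinAt x (a - b * y t) (Set.Ioi T₁) t :=
        (hx t (le_trans hT₁0 (le_of_lt ht))).mono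
          (fun s hs => le_trans hT₁0 (le_of_lt hs))
      exact h1.add ((hasDerivAt_id t).hasDerivWithinAt)
    · intro t ht
      rw [interior_Ici] at ht
      have := hderiv_le t (le_of_lt ht)
      linarith
  -- Step 4: conclude.
  refine ⟨max T₁ (x T₁ + T₁ + 1), fun t ht => ?_⟩
  have ht1 : T₁ ≤ t := le_trans (le_max_left _ _) ht
  have ht2 : x T₁ + T₁ + 1 ≤ t := le_trans (le_max_right _ _) ht
  have := hhanti (Set.self_mem_Ici) ht1 ht1
  simp only at this
  linarith
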